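/- Let κ > 0 and write f_κ(y) = y^{κ-1} e^{-y} for y > 0. Let h(y) = y^{1-κ} e^y. Then h is strictly increasing on [max(κ-1,0), ∞), its inverse h^← satisfies h^←(z) ~ log z as z → ∞, and ∫_{h^←(z)}^∞ e^{-y} y^{κ-1} dy ~ z^{-1} as z → ∞. -/

import Mathlib

open Real Filter MeasureTheory Set Asymptotics Topology

/-- `h(y) = y^{1-κ} e^y`. -/
noncomputable def hk (κ y : ℝ) : ℝ := y ^ (1 - κ) * Real.exp y

/-- Generalized inverse of `h` on `[max(κ-1,0), ∞)`. -/
noncomputable def hkInv (κ z : ℝ) : ℝ := sInf {y : ℝ | max (κ - 1) 0 ≤ y ∧ z ≤ hk κ y}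

namespace SupfOUAux

variable {κ : ℝ}

lemma hk_continuousOn (hκ : 0 < κ) : ContinuousOn (hk κ) (Set.Ici (max (κ - 1) 0)) := by
  intro y hy
  apply ContinuousWithinAt.mul _ Real.continuous_exp.continuousAt.continuousWithinAt
  apply ContinuousAt.continuousWithinAt
  apply Real.continuousAt_rpow_const
  rcases lt_or_ge 0 y with h | h
  · exact Or.inl h.ne'
  · right
    have h1 : κ - 1 ≤ y := le_trans (le_max_left _ _) hy
    linarith

lemma hk_strictMonoOn (hκ : 0 < κ) : StrictMonoOn (hk κ) (Set.Ici (max (κ - 1) 0)) := by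
  apply strictMonoOn_of_deriv_pos (convex_Ici _) (hk_continuousOn hκ)
  intro x hx
  rw [interior_Ici] at hx
  have hx0 : 0 < x := lt_of_le_of_lt (le_max_right _ _) hx
  have hxκ : κ - 1 < x := lt_of_le_of_lt (le_max_left _ _) hx
  have hd : HasDerivAt (hk κ) ((x + (1 - κ)) * (x ^ (-κ) * Real.exp x)) x := by
    have h1 : HasDerivAt (fun y : ℝ => y ^ (1 - κ)) ((1 - κ) * x ^ (1 - κ - 1)) x :=
      Real.hasDerivAt_rpow_const (Or.inl hx0.ne')
    have h2 := h1.mul (Real.hasDerivAt_exp x)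
    refine h2.congr_deriv ?_
    have e1 : x ^ (1 - κ - 1) = x ^ (-κ) := by congr 1; ring
    have e2 : x ^ (1 - κ) = x * x ^ (-κ) := by
      rw [show (1 : ℝ) - κ = 1 + -κ by ring, Real.rpow_add hx0, Real.rpow_one]
    rw [e1, e2]; ring
  rw [hd.deriv]
  have : 0 < x + (1 - κ) := by linarith
  positivity

lemma hk_tendsto_atTop (hκ : 0 < κ) : Tendsto (hk κ) atTop atTop := by
  apply Tendsto.congr' _ (tendsto_exp_div_rpow_atTop (κ - 1))
  filter_upwards [eventually_gt_atTop (0 : ℝ)] with y hy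
  rw [hk, show (1 : ℝ) - κ = -(κ - 1) by ring, Real.rpow_neg hy.le, div_eq_mul_inv, mul_comm]

lemma hkInv_spec (hκ : 0 < κ) {z : ℝ} (hz : hk κ (max (κ - 1) 0) ≤ z) :
    max (κ - 1) 0 ≤ hkInv κ z ∧ hk κ (hkInv κ z) = z := by
  set a := max (κ - 1) 0 with ha
  obtain ⟨b, hb1, hb2⟩ := (((hk_tendsto_atTop hκ).eventually_ge_atTop z).and
    (eventually_ge_atTop a)).exists
  have hmem : z ∈ Set.Icc (hk κ a) (hk κ b) := ⟨hz, hb1⟩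
  have hIVT := intermediate_value_Icc hb2 ((hk_continuousOn hκ).mono (Icc_subset_Ici_self))
  obtain ⟨y, hy, hyz⟩ := hIVT hmem
  have hya : a ≤ y := hy.1
  have hlb : ∀ w ∈ {y : ℝ | a ≤ y ∧ z ≤ hk κ y}, y ≤ w := by
    intro w hw
    by_contra h
    push_neg at h
    have := (hk_strictMonoOn hκ) hw.1 hya h
    rw [hyz] at this
    exact absurd hw.2 (not_le.mpr this)
  have hmemS : y ∈ {y : ℝ | a ≤ y ∧ z ≤ hk κ y} := ⟨hya, hyz.ge⟩
  have heq : hkInv κ z = y := by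
    apply le_antisymm
    · exact csInf_le ⟨a, fun w hw => hw.1⟩ hmemS
    · exact le_csInf ⟨y, hmemS⟩ hlb
  rw [heq, hyz]
  exact ⟨hya, rfl⟩

lemma hkInv_tendsto (hκ : 0 < κ) : Tendsto (hkInv κ) atTop atTop := by
  rw [tendsto_atTop]
  intro b
  set a := max (κ - 1) 0 with ha
  filter_upwards [eventually_ge_atTop (hk κ (max b a)), eventually_ge_atTop (hk κ a)]
    with z h1 h2
  obtain ⟨hmem, heq⟩ := hkInv_spec hκ h2
  have hba : max b a ≤ hkInv κ z := by
    by_contra h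
    push_neg at h
    have := (hk_strictMonoOn hκ) hmem (le_max_right b a) h
    rw [heq] at this
    exact absurd h1 (not_le.mpr this)
  exact le_trans (le_max_left _ _) hba

lemma part2 (hκ : 0 < κ) : IsEquivalent atTop (hkInv κ) Real.log := by
  rw [isEquivalent_iff_tendsto_one (by
    filter_upwards [eventually_gt_atTop (1 : ℝ)] with z hz
    exact (Real.log_pos hz).ne')]
  have hdiv : Tendsto (fun y : ℝ => Real.log y / y) atTop (𝓝 0) :=
    Real.isLittleO_log_id_atTop.tendsto_div_nhds_zero
  have hψ : Tendsto (fun y : ℝ => ((1 - κ) * (Real.log y / y) + 1)⁻¹) atTop (𝓝 1) := by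
    have h0 : Tendsto (fun y : ℝ => (1 - κ) * (Real.log y / y) + 1) atTop (𝓝 1) := by
      have := (hdiv.const_mul (1 - κ)).add_const 1
      simpa using this
    have := h0.inv₀ (by norm_num)
    simpa using this
  have hcomp := hψ.comp (hkInv_tendsto hκ)
  apply Tendsto.congr' _ hcomp
  filter_upwards [(hkInv_tendsto hκ).eventually_gt_atTop 1,
    eventually_ge_atTop (hk κ (max (κ - 1) 0)), eventually_gt_atTop (1 : ℝ)]
    with z hy1 hz2 hz1
  obtain ⟨hmem, heq⟩ := hkInv_spec hκ hz2
  set y := hkInv κ z with hy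
  have hy0 : 0 < y := lt_trans one_pos hy1
  have hlog : Real.log z = (1 - κ) * Real.log y + y := by
    rw [← heq]
    unfold hk
    rw [Real.log_mul (by positivity) (Real.exp_ne_zero y), Real.log_rpow hy0, Real.log_exp]
  have hstep : (1 - κ) * (Real.log y / y) + 1 = ((1 - κ) * Real.log y + y) / y := by
    field_simp
  show ((1 - κ) * (Real.log y / y) + 1)⁻¹ = hkInv κ z / Real.log z
  rw [hstep, inv_div, hlog, ← hy]

lemma gammaTail_integrableOn {x : ℝ} (hx : 0 < x) (p : ℝ) :
    IntegrableOn (fun t => Real.exp (-t) * t ^ p) (Set.Ioi x) := by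
  apply integrable_of_isBigO_exp_neg (one_half_pos) ?_ ?_
  · intro t ht
    have ht0 : 0 < t := lt_of_lt_of_le hx ht
    exact (((Real.continuous_exp.comp continuous_neg).continuousAt).mul
      (Real.continuousAt_rpow_const t p (Or.inl ht0.ne'))).continuousWithinAt
  · apply IsLittleO.isBigO
    apply Asymptotics.isLittleO_of_tendsto (fun t h => absurd h (Real.exp_ne_zero _))
    have hev : ∀ᶠ t in atTop, t ^ p * Real.exp (-(1 / 2 : ℝ) * t)
        = Real.exp (-t) * t ^ p / Real.exp (-(1 / 2 : ℝ) * t) := by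
      filter_upwards [] with t
      rw [mul_comm (Real.exp (-t)), mul_div_assoc, ← Real.exp_sub]
      congr 2
      ring
    exact Tendsto.congr' hev
      (tendsto_rpow_mul_exp_neg_mul_atTop_nhds_zero p (1 / 2) one_half_pos)

lemma gamma_tail_equiv (κ : ℝ) :
    IsEquivalent atTop (fun x => ∫ t in Set.Ioi x, Real.exp (-t) * t ^ (κ - 1))
      (fun x => Real.exp (-x) * x ^ (κ - 1)) := by
  set c := |κ - 1| with hc
  have hc0 : 0 ≤ c := abs_nonneg _
  have key : ∀ x : ℝ, 0 < x →
      (1 - c / x) * (∫ t in Set.Ioi x, Real.exp (-t) * t ^ (κ - 1))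
        ≤ Real.exp (-x) * x ^ (κ - 1) ∧
      Real.exp (-x) * x ^ (κ - 1)
        ≤ (1 + c / x) * (∫ t in Set.Ioi x, Real.exp (-t) * t ^ (κ - 1)) := by
    intro x hx
    set φ : ℝ → ℝ := fun t =>
      Real.exp (-t) * t ^ (κ - 1) - (κ - 1) * (Real.exp (-t) * t ^ (κ - 2)) with hφ
    have hφint : IntegrableOn φ (Set.Ioi x) :=
      (gammaTail_integrableOn hx (κ - 1)).sub ((gammaTail_integrableOn hx (κ - 2)).const_mul _)
    have hInt : IntegrableOn (fun t => Real.exp (-t) * t ^ (κ - 1)) (Set.Ioi x) :=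
      gammaTail_integrableOn hx _
    have hg : ∀ t ∈ Set.Ici x, HasDerivAt (fun t : ℝ => -(t ^ (κ - 1) * Real.exp (-t))) (φ t) t := by
      intro t ht
      have ht0 : 0 < t := lt_of_lt_of_le hx ht
      have h1 : HasDerivAt (fun t : ℝ => t ^ (κ - 1)) ((κ - 1) * t ^ (κ - 1 - 1)) t :=
        Real.hasDerivAt_rpow_const (Or.inl ht0.ne')
      have h2 : HasDerivAt (fun t : ℝ => Real.exp (-t)) (-Real.exp (-t)) t := by
        exact ((hasDerivAt_neg t).exp).congr_deriv (by ring)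
      have h3 := (h1.mul h2).neg
      refine h3.congr_deriv ?_
      have e1 : t ^ (κ - 1 - 1) = t ^ (κ - 2) := by congr 1; ring
      rw [hφ]
      simp only []
      rw [← e1]
      ring
    have hzero : Tendsto (fun t : ℝ => -(t ^ (κ - 1) * Real.exp (-t))) atTop (𝓝 0) := by
      have := (tendsto_rpow_mul_exp_neg_mul_atTop_nhds_zero (κ - 1) 1 one_pos).neg
      simp only [neg_one_mul, neg_zero] at this
      exact this
    have hftc : ∫ t in Set.Ioi x, φ t = Real.exp (-x) * x ^ (κ - 1) := by
      have := integral_Ioi_of_hasDerivAt_of_tendsto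
        ((hg x self_mem_Ici).continuousAt.continuousWithinAt)
        (fun t (ht : t ∈ Set.Ioi x) => hg t (Set.mem_Ici.mpr (le_of_lt ht))) hφint hzero
      rw [this]; ring
    have hbnd : ∀ t ∈ Set.Ioi x,
        |(κ - 1) * (Real.exp (-t) * t ^ (κ - 2))| ≤ (c / x) * (Real.exp (-t) * t ^ (κ - 1)) := by
      intro t ht
      have ht0 : 0 < t := hx.trans ht
      rw [abs_mul, abs_of_nonneg (by positivity : (0 : ℝ) ≤ Real.exp (-t) * t ^ (κ - 2))]
      have h2 : t ^ (κ - 2) = t ^ (κ - 1) / t := by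
        rw [show κ - 2 = κ - 1 - 1 by ring, Real.rpow_sub ht0, Real.rpow_one]
      rw [h2, ← hc]
      rw [show c * (Real.exp (-t) * (t ^ (κ - 1) / t)) = c * Real.exp (-t) * t ^ (κ - 1) / t
        by ring, show c / x * (Real.exp (-t) * t ^ (κ - 1)) = c * Real.exp (-t) * t ^ (κ - 1) / x
        by ring]
      gcongr
      exact ht.le
    constructor
    · have hmono : ∫ t in Set.Ioi x, (1 - c / x) * (Real.exp (-t) * t ^ (κ - 1))
          ≤ ∫ t in Set.Ioi x, φ t := by
        apply setIntegral_mono_on (hInt.const_mul _) hφint measurableSet_Ioi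
        intro t ht
        have h := hbnd t ht
        have h' := (abs_le.mp h).2
        rw [hφ]
        simp only []
        nlinarith [(abs_le.mp (hbnd t ht)).1, (abs_le.mp (hbnd t ht)).2]
      calc (1 - c / x) * (∫ t in Set.Ioi x, Real.exp (-t) * t ^ (κ - 1))
          = ∫ t in Set.Ioi x, (1 - c / x) * (Real.exp (-t) * t ^ (κ - 1)) :=
            (integral_const_mul _ _).symm
        _ ≤ ∫ t in Set.Ioi x, φ t := hmono
        _ = Real.exp (-x) * x ^ (κ - 1) := hftc
    · have hmono : ∫ t in Set.Ioi x, φ t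
          ≤ ∫ t in Set.Ioi x, (1 + c / x) * (Real.exp (-t) * t ^ (κ - 1)) := by
        apply setIntegral_mono_on hφint (hInt.const_mul _) measurableSet_Ioi
        intro t ht
        rw [hφ]
        simp only []
        nlinarith [(abs_le.mp (hbnd t ht)).1, (abs_le.mp (hbnd t ht)).2]
      calc Real.exp (-x) * x ^ (κ - 1) = ∫ t in Set.Ioi x, φ t := hftc.symm
        _ ≤ ∫ t in Set.Ioi x, (1 + c / x) * (Real.exp (-t) * t ^ (κ - 1)) := hmono
        _ = (1 + c / x) * (∫ t in Set.Ioi x, Real.exp (-t) * t ^ (κ - 1)) :=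
            integral_const_mul _ _
  rw [isEquivalent_iff_tendsto_one (by
    filter_upwards [eventually_gt_atTop (0 : ℝ)] with x hx
    positivity)]
  have hcx : Tendsto (fun x : ℝ => c / x) atTop (𝓝 0) :=
    Tendsto.div_atTop tendsto_const_nhds tendsto_id
  have hlo : Tendsto (fun x : ℝ => (1 + c / x)⁻¹) atTop (𝓝 1) := by
    have h1 : Tendsto (fun x : ℝ => 1 + c / x) atTop (𝓝 1) := by
      simpa using hcx.const_add 1
    simpa using h1.inv₀ (by norm_num)
  have hhi : Tendsto (fun x : ℝ => (1 - c / x)⁻¹) atTop (𝓝 1) := by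
    have h1 : Tendsto (fun x : ℝ => 1 - c / x) atTop (𝓝 1) := by
      have := (tendsto_const_nhds (x := (1 : ℝ)) (f := atTop)).sub hcx
      simpa using this
    simpa using h1.inv₀ (by norm_num)
  apply tendsto_of_tendsto_of_tendsto_of_le_of_le' hlo hhi
  · filter_upwards [eventually_gt_atTop (max c 0)] with x hx
    have hx0 : 0 < x := lt_of_le_of_lt (le_max_right _ _) hx
    have hxc : c < x := lt_of_le_of_lt (le_max_left _ _) hx
    have hA : 0 < Real.exp (-x) * x ^ (κ - 1) := by positivity
    have h1cx : 0 < 1 + c / x := by positivity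
    obtain ⟨hk1, hk2⟩ := key x hx0
    have hI : 0 < ∫ t in Set.Ioi x, Real.exp (-t) * t ^ (κ - 1) := by
      nlinarith
    rw [Pi.div_apply, le_div_iff₀ hA]
    calc (1 + c / x)⁻¹ * (Real.exp (-x) * x ^ (κ - 1))
        ≤ (1 + c / x)⁻¹ * ((1 + c / x) * ∫ t in Set.Ioi x, Real.exp (-t) * t ^ (κ - 1)) :=
          mul_le_mul_of_nonneg_left hk2 (inv_nonneg.mpr h1cx.le)
      _ = ∫ t in Set.Ioi x, Real.exp (-t) * t ^ (κ - 1) := by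
          rw [← mul_assoc, inv_mul_cancel₀ h1cx.ne', one_mul]
  · filter_upwards [eventually_gt_atTop (max c 0)] with x hx
    have hx0 : 0 < x := lt_of_le_of_lt (le_max_right _ _) hx
    have hxc : c < x := lt_of_le_of_lt (le_max_left _ _) hx
    have hA : 0 < Real.exp (-x) * x ^ (κ - 1) := by positivity
    have hcxlt : c / x < 1 := (div_lt_one hx0).mpr hxc
    have h1cx : 0 < 1 - c / x := by linarith
    obtain ⟨hk1, hk2⟩ := key x hx0
    rw [Pi.div_apply, div_le_iff₀ hA]
    calc ∫ t in Set.Ioi x, Real.exp (-t) * t ^ (κ - 1)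
        = (1 - c / x)⁻¹ * ((1 - c / x) * ∫ t in Set.Ioi x, Real.exp (-t) * t ^ (κ - 1)) := by
          rw [← mul_assoc, inv_mul_cancel₀ h1cx.ne', one_mul]
      _ ≤ (1 - c / x)⁻¹ * (Real.exp (-x) * x ^ (κ - 1)) :=
          mul_le_mul_of_nonneg_left hk1 (inv_nonneg.mpr h1cx.le)

end SupfOUAux

theorem stmt11 (κ : ℝ) (hκ : 0 < κ) :
    StrictMonoOn (hk κ) (Set.Ici (max (κ - 1) 0)) ∧
    Asymptotics.IsEquivalent Filter.atTop (hkInv κ) Real.log ∧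
    Asymptotics.IsEquivalent Filter.atTop
      (fun z => ∫ y in Set.Ioi (hkInv κ z), Real.exp (-y) * y ^ (κ - 1))
      (fun z => z⁻¹) := by
  refine ⟨SupfOUAux.hk_strictMonoOn hκ, SupfOUAux.part2 hκ, ?_⟩
  have h1 : Asymptotics.IsEquivalent Filter.atTop
      (fun z => ∫ y in Set.Ioi (hkInv κ z), Real.exp (-y) * y ^ (κ - 1))
      (fun z => Real.exp (-(hkInv κ z)) * (hkInv κ z) ^ (κ - 1)) :=
    (SupfOUAux.gamma_tail_equiv κ).comp_tendsto (SupfOUAux.hkInv_tendsto hκ)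
  apply h1.trans
  apply Filter.EventuallyEq.isEquivalent
  filter_upwards [eventually_ge_atTop (hk κ (max (κ - 1) 0)),
    (SupfOUAux.hkInv_tendsto hκ).eventually_gt_atTop 0] with z hz hy0
  obtain ⟨hmem, heq⟩ := SupfOUAux.hkInv_spec hκ hz
  set y := hkInv κ z with hy
  rw [← heq]
  unfold hk
  rw [mul_inv, ← Real.exp_neg, ← Real.rpow_neg hy0.le, show -(1 - κ) = κ - 1 by ring]
  exact mul_comm _ _
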